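/- For the Gateaux directional derivative together with the three first-order differential operations on ℝ³ (equivalently, for the composability digraph on {0,1,2,3} with an edge i→j iff (i=0 and j=0) or (i=3 and j=0) or j=i+1 or i+j=4), the number g(k) of meaningful k-th order compositions equals 2^{k+1} for all k ≥ 1. -/

import Mathlib

/-- Adjacency matrix of the composability digraph of the `n` first-order
differential operations `∇_1, …, ∇_n` on `ℝⁿ` (index `i : Fin n` represents
the operation `∇_{i+1}`): there is an edge `i → j` iff `j = i + 1` or
`i + j = n + 1` (in the 1-based indexing of the paper). -/
def adjA (n : ℕ) : Matrix (Fin n) (Fin n) ℤ :=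
  Matrix.of fun i j =>
    if (j : ℕ) = (i : ℕ) + 1 ∨ (i : ℕ) + (j : ℕ) + 2 = n + 1 then 1 else 0

/-- `fCount n k` is the number of meaningful `k`-th order compositions of the
differential operations on `ℝⁿ`, i.e. the number of sequences
`(i_1, …, i_k) ∈ {1, …, n}^k` each consecutive pair of which is composable. -/
def fCount (n k : ℕ) : ℕ :=
  (Finset.univ.filter fun s : Fin k → Fin n =>
    ∀ i j : Fin k, (j : ℕ) = (i : ℕ) + 1 → adjA n (s i) (s j) = 1).card

/-- Adjacency matrix of the composability digraph of the Gateaux directional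
derivative `∇_0` together with the `n` first-order differential operations
`∇_1, …, ∇_n` on `ℝⁿ` (index `i : Fin (n+1)` represents `∇_i`): there is an
edge `i → j` iff `(i = 0 ∧ j = 0)` or `(i = n ∧ j = 0)` or `j = i + 1` or
`i + j = n + 1`. -/
def adjB (n : ℕ) : Matrix (Fin (n + 1)) (Fin (n + 1)) ℤ :=
  Matrix.of fun i j =>
    if ((i : ℕ) = 0 ∧ (j : ℕ) = 0) ∨ ((i : ℕ) = n ∧ (j : ℕ) = 0) ∨
        (j : ℕ) = (i : ℕ) + 1 ∨ (i : ℕ) + (j : ℕ) = n + 1 then 1 else 0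

/-- `gCount n k` is the number of meaningful `k`-th order compositions of the
differential operations together with the Gateaux directional derivative on
`ℝⁿ`, i.e. the number of sequences `(i_1, …, i_k) ∈ {0, 1, …, n}^k` each
consecutive pair of which is composable. -/
def gCount (n k : ℕ) : ℕ :=
  (Finset.univ.filter fun s : Fin k → Fin (n + 1) =>
    ∀ i j : Fin k, (j : ℕ) = (i : ℕ) + 1 → adjB n (s i) (s j) = 1).card

/-- The number of meaningful `k`-th order compositions of the Gateaux
directional derivative together with grad, curl, div on `ℝ³` equals `2^(k+1)`. -/
def inNbr (v : Fin 4) (b : Fin 2) : Fin 4 :=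
  if (v : ℕ) ≤ 1 then (if b = 0 then 0 else 3) else (if b = 0 then 1 else 2)

def idx (u : Fin 4) : Fin 2 := if (u : ℕ) ≤ 1 then 0 else 1

lemma inNbr_adj : ∀ (v : Fin 4) (b : Fin 2), adjB 3 (inNbr v b) v = 1 := by decide
lemma inNbr_idx : ∀ u v : Fin 4, adjB 3 u v = 1 → inNbr v (idx u) = u := by
  intro u v
  fin_cases u <;> fin_cases v <;> decide
lemma idx_inNbr : ∀ (v : Fin 4) (b : Fin 2), idx (inNbr v b) = b := by decide

lemma gCount_eq_card (k : ℕ) :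
    gCount 3 k = Fintype.card {s : Fin k → Fin 4 //
      ∀ i j : Fin k, (j : ℕ) = (i : ℕ) + 1 → adjB 3 (s i) (s j) = 1} := by
  rw [gCount, Fintype.card_subtype]

def walkEquiv (m : ℕ) :
    {s : Fin (m + 2) → Fin 4 //
      ∀ i j : Fin (m + 2), (j : ℕ) = (i : ℕ) + 1 → adjB 3 (s i) (s j) = 1} ≃
    Fin 2 × {t : Fin (m + 1) → Fin 4 //
      ∀ i j : Fin (m + 1), (j : ℕ) = (i : ℕ) + 1 → adjB 3 (t i) (t j) = 1} where
  toFun s := (idx (s.1 0), ⟨Fin.tail s.1, fun i j hij => by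
    have := s.2 i.succ j.succ (by simp [Fin.val_succ, hij])
    simpa [Fin.tail] using this⟩)
  invFun p := ⟨Fin.cons (inNbr (p.2.1 0) p.1) p.2.1, by
    intro i j hij
    have hj0 : j ≠ 0 := by
      intro h; subst h; simp at hij
    obtain ⟨j', rfl⟩ := Fin.exists_succ_eq.mpr hj0
    induction i using Fin.cases with
    | zero =>
        have hj' : j' = 0 := by
          apply Fin.ext; simpa [Fin.val_succ] using hij
        subst hj'
        simpa [Fin.cons_zero, Fin.cons_succ] using inNbr_adj (p.2.1 0) p.1
    | succ i' =>
        have hij' : (j' : ℕ) = (i' : ℕ) + 1 := by simpa [Fin.val_succ] using hij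
        simpa [Fin.cons_succ] using p.2.2 i' j' hij'⟩
  left_inv s := by
    apply Subtype.ext
    have h0 : adjB 3 (s.1 0) (s.1 (Fin.succ 0)) = 1 := s.2 0 (Fin.succ 0) (by simp)
    show Fin.cons (inNbr (Fin.tail s.1 0) (idx (s.1 0))) (Fin.tail s.1) = s.1
    rw [show Fin.tail s.1 0 = s.1 (Fin.succ 0) from rfl, inNbr_idx _ _ h0,
      Fin.cons_self_tail]
  right_inv p := by
    obtain ⟨b, t, ht⟩ := p
    refine Prod.ext ?_ (Subtype.ext ?_)
    · simp [idx_inNbr]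
    · simp

lemma gCount_succ (m : ℕ) : gCount 3 (m + 2) = 2 * gCount 3 (m + 1) := by
  rw [gCount_eq_card, gCount_eq_card, Fintype.card_congr (walkEquiv m),
    Fintype.card_prod, Fintype.card_fin]

theorem gCount_three_eq_two_pow (k : ℕ) (hk : 1 ≤ k) :
    gCount 3 k = 2 ^ (k + 1) := by
  induction k with
  | zero => omega
  | succ n ih =>
      match n, ih with
      | 0, _ => decide
      | m + 1, ih =>
          rw [gCount_succ, ih (by omega)]
          ring
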